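/- Dually, under the same hypotheses (σ a simplex with sharp affine metric, f affine and generic on σ), if a facet τ of σ has an out-flow (the negative gradient −∇f points into the interior of σ from interior points of τ), then τ contains the vertex of σ at which f attains its maximum. -/

import Mathlib

open EuclideanGeometry Real

/-- The metric on `σ` is *sharp* (Definition 5.2): for every vertex `a` of `σ` (taken from
the vertex set `vert`) and every 2-dimensional affine plane `L` through `a` whose
intersection with `σ` is a (nondegenerate) triangle `abc`, the triangle is acute-angled. -/
def SharpSet (m : ℕ) (σ : Set (EuclideanSpace ℝ (Fin m)))
    (vert : Set (EuclideanSpace ℝ (Fin m))) : Prop :=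
  ∀ a ∈ vert, ∀ b c : EuclideanSpace ℝ (Fin m),
    AffineIndependent ℝ ![a, b, c] →
    (∃ L : AffineSubspace ℝ (EuclideanSpace ℝ (Fin m)), a ∈ L ∧
      Module.finrank ℝ L.direction = 2 ∧
      (L : Set (EuclideanSpace ℝ (Fin m))) ∩ σ = convexHull ℝ {a, b, c}) →
    ∠ b a c < π / 2 ∧ ∠ a b c < π / 2 ∧ ∠ a c b < π / 2

/-- From an angle strictly less than `π/2` between nonzero vectors, the inner ℝ product is
positive. -/
lemma aux_inner_pos_of_angle_lt {E : Type*} [NormedAddCommGroup E] [InnerProductSpace ℝ E]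
    {x y : E} (hx : x ≠ 0) (hy : y ≠ 0) (h : InnerProductGeometry.angle x y < π / 2) :
    0 < (inner ℝ x y : ℝ) := by
  rw [InnerProductGeometry.angle] at h
  have h1 : 0 < (inner ℝ x y : ℝ) / (‖x‖ * ‖y‖) := Real.arccos_lt_pi_div_two.mp h
  have h2 : 0 < ‖x‖ * ‖y‖ := by
    have hx' : 0 < ‖x‖ := norm_pos_iff.mpr hx
    have hy' : 0 < ‖y‖ := norm_pos_iff.mpr hy
    positivity
  have h3 := mul_pos h1 h2
  rwa [div_mul_cancel₀ _ (ne_of_gt h2)] at h3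

set_option maxHeartbeats 1000000 in
/-- Corollary 6.3: Dually to Proposition 6.2, if the facet `τ` opposite to
the vertex `v i₁` of the simplex `σ` (with sharp metric, generic affine `f`) has an
out-flow (the flow along `-g` from relative interior points of `τ` enters the interior of
`σ` for small positive times), then `τ` contains the vertex at which `f` is maximal. -/
theorem stmt13 (m : ℕ) (v : Fin (m + 1) → EuclideanSpace ℝ (Fin m))
    (hv : AffineIndependent ℝ v)
    (hsharp : SharpSet m (convexHull ℝ (Set.range v)) (Set.range v))
    (g : EuclideanSpace ℝ (Fin m)) (c₀ : ℝ) (f : EuclideanSpace ℝ (Fin m) → ℝ)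
    (hf : ∀ x, f x = inner ℝ g x + c₀)
    (hdistinct : Function.Injective fun i => f (v i))
    (hpar : ∀ i : Fin (m + 1), g ∉ vectorSpan ℝ (v '' {i}ᶜ))
    (i₁ : Fin (m + 1))
    (hout : ∀ x ∈ intrinsicInterior ℝ (convexHull ℝ (v '' {i₁}ᶜ)),
      ∀ᶠ t in nhdsWithin (0 : ℝ) (Set.Ioi 0),
        x + t • (-g) ∈ interior (convexHull ℝ (Set.range v))) :
    ∃ i₀, i₀ ≠ i₁ ∧ ∀ j, f (v j) ≤ f (v i₀) := by
  classical
  obtain ⟨i₀, hi₀⟩ := Finite.exists_max fun i => f (v i)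
  by_cases hne : i₀ = i₁
  swap
  · exact ⟨i₀, hne, hi₀⟩
  exfalso
  have hmax : ∀ j, f (v j) ≤ f (v i₁) := hne ▸ hi₀
  clear hi₀ hne i₀
  -- the degenerate case `m = 0`
  rcases Nat.eq_zero_or_pos m with hm0 | hm
  · have hsub : Subsingleton (EuclideanSpace ℝ (Fin m)) := by subst hm0; infer_instance
    exact hpar i₁ (by rw [Subsingleton.elim g 0]; exact Submodule.zero_mem _)
  -- an affine basis from the vertices
  have hcard : Fintype.card (Fin (m + 1)) = Module.finrank ℝ (EuclideanSpace ℝ (Fin m)) + 1 := by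
    simp [finrank_euclideanSpace_fin]
  have htot : affineSpan ℝ (Set.range v) = ⊤ :=
    hv.affineSpan_eq_top_iff_card_eq_finrank_add_one.mpr hcard
  let b : AffineBasis (Fin (m + 1)) ℝ (EuclideanSpace ℝ (Fin m)) := ⟨v, hv, htot⟩
  have hb : ⇑b = v := rfl
  have hσ : convexHull ℝ (Set.range v) = {x | ∀ i, 0 ≤ b.coord i x} := by
    rw [← hb]; exact b.convexHull_eq_nonneg_coord
  have hco : ∀ i j, b.coord i (v j) = if i = j then 1 else 0 := fun i j => b.coord_apply i j
  have hadd : ∀ (j : Fin (m + 1)) (x z : EuclideanSpace ℝ (Fin m)),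
      b.coord j (x + z) = b.coord j x + (b.coord j).linear z := by
    intro j x z
    have h := (b.coord j).map_vadd x z
    simpa [vadd_eq_add, add_comm] using h
  have hsub' : ∀ (j : Fin (m + 1)) (x y : EuclideanSpace ℝ (Fin m)),
      (b.coord j).linear (x - y) = b.coord j x - b.coord j y := by
    intro j x y
    have h := (b.coord j).linearMap_vsub x y
    simpa [vsub_eq_sub] using h
  -- the linear functional of the `i₁`-th coordinate, and its Riesz vector `u`
  set φ : EuclideanSpace ℝ (Fin m) →ₗ[ℝ] ℝ := (b.coord i₁).linear with hφ
  set u : EuclideanSpace ℝ (Fin m) :=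
    (InnerProductSpace.toDual ℝ _).symm (LinearMap.toContinuousLinearMap φ) with hudef
  have hu : ∀ z, (inner ℝ u z : ℝ) = φ z := fun z => InnerProductSpace.toDual_symm_apply
  -- coordinates vanish on the facet hull
  have hτ0 : ∀ x ∈ convexHull ℝ (v '' {i₁}ᶜ), b.coord i₁ x = 0 := by
    intro x hx
    have hsubs : v '' {i₁}ᶜ ⊆ {z | b.coord i₁ z = 0} := by
      rintro _ ⟨j, hj, rfl⟩
      have hj' : j ≠ i₁ := hj
      simp only [Set.mem_setOf_eq, hco]
      simp [Ne.symm hj']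
    have hconv : Convex ℝ {z | b.coord i₁ z = 0} := by
      have he : {z | b.coord i₁ z = 0} = (b.coord i₁) ⁻¹' {(0 : ℝ)} := rfl
      rw [he]
      exact (convex_singleton (0 : ℝ)).affine_preimage _
    exact convexHull_min hsubs hconv hx
  -- a second index
  have hnt : Nontrivial (Fin (m + 1)) := Fin.nontrivial_iff_two_le.mpr (by omega)
  obtain ⟨j₀, hj₀⟩ := exists_ne i₁
  -- a relative interior point of the facet, and the out-flow condition
  have hτne : (convexHull ℝ (v '' {i₁}ᶜ)).Nonempty :=
    ⟨v j₀, subset_convexHull _ _ ⟨j₀, hj₀, rfl⟩⟩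
  obtain ⟨x, hx⟩ := hτne.intrinsicInterior (convex_convexHull ℝ _)
  obtain ⟨t, ht, hmem⟩ := ((eventually_mem_nhdsWithin.and (hout x hx)).exists)
  have ht0 : (0 : ℝ) < t := ht
  have hxτ : x ∈ convexHull ℝ (v '' {i₁}ᶜ) := intrinsicInterior_subset hx
  have h1 : 0 < b.coord i₁ (x + t • (-g)) := by
    have h := hmem
    rw [← hb, b.interior_convexHull] at h
    exact h i₁
  have hug : (inner ℝ u g : ℝ) < 0 := by
    rw [hadd, hτ0 x hxτ, zero_add] at h1
    have he : (b.coord i₁).linear (t • (-g)) = t * (-(φ g)) := by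
      rw [← hφ, map_smul, map_neg]; simp [smul_eq_mul]
    rw [he] at h1
    rw [hu]
    nlinarith
  -- `u` is nonzero
  have hu1 : ∀ j, j ≠ i₁ → (inner ℝ u (v i₁ - v j) : ℝ) = 1 := by
    intro j hj
    rw [hu, hφ, hsub' i₁ (v i₁) (v j), hco, hco]
    simp [Ne.symm hj]
  have hune : u ≠ 0 := by
    intro h0
    have h := hu1 j₀ hj₀
    rw [h0] at h
    simp at h
  have hnu : (0 : ℝ) < ‖u‖ ^ 2 := by
    have : (0 : ℝ) < ‖u‖ := norm_pos_iff.mpr hune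
    positivity
  have hφu : φ u = ‖u‖ ^ 2 := by rw [← hu]; exact real_inner_self_eq_norm_sq u
  -- the foot of the altitude from `v i₁`
  set p : EuclideanSpace ℝ (Fin m) := v i₁ - (‖u‖ ^ 2)⁻¹ • u with hp
  have hβp : b.coord i₁ p = 0 := by
    have he : p = v i₁ + (-((‖u‖ ^ 2)⁻¹ • u)) := by rw [hp]; abel
    rw [he, hadd, hco]
    simp only [map_neg, map_smul, smul_eq_mul, if_pos]
    rw [← hφ, hφu]
    field_simp
    ring
  -- strict maximality at `i₁`
  have hgt : ∀ j, j ≠ i₁ → 0 < (inner ℝ g (v i₁ - v j) : ℝ) := by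
    intro j hj
    have h1' : f (v j) ≤ f (v i₁) := hmax j
    have h2 : f (v j) ≠ f (v i₁) := fun h => hj (hdistinct h)
    have h3 : f (v j) < f (v i₁) := lt_of_le_of_ne h1' h2
    rw [hf, hf] at h3
    rw [inner_sub_right]
    linarith
  -- the component of `g` parallel to the facet
  set s₀ : ℝ := (inner ℝ u g : ℝ) / ‖u‖ ^ 2 with hs₀
  have hs₀neg : s₀ < 0 := div_neg_of_neg_of_pos hug hnu
  set w : EuclideanSpace ℝ (Fin m) := g - s₀ • u with hw
  have hwu : (inner ℝ w u : ℝ) = 0 := by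
    rw [hw, inner_sub_left, real_inner_smul_left, real_inner_self_eq_norm_sq, hs₀,
      real_inner_comm u g]
    field_simp
    ring
  have hkey : ∀ j, j ≠ i₁ → -s₀ ≤ (inner ℝ w (p - v j) : ℝ) := by
    intro j hj
    have e0 : p - v j = (v i₁ - v j) - (‖u‖ ^ 2)⁻¹ • u := by rw [hp]; abel
    have e1 : (inner ℝ w (p - v j) : ℝ) = inner ℝ w (v i₁ - v j) := by
      rw [e0, inner_sub_right, real_inner_smul_right, hwu]
      ring
    have e2 : (inner ℝ w (v i₁ - v j) : ℝ)
        = (inner ℝ g (v i₁ - v j) : ℝ) - s₀ * (inner ℝ u (v i₁ - v j) : ℝ) := by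
      rw [hw, inner_sub_left, real_inner_smul_left]
    rw [e1, e2, hu1 j hj]
    have := hgt j hj
    linarith
  -- all barycentric coordinates of `p` are nonnegative (uses sharpness)
  have hcoords : ∀ k, 0 ≤ b.coord k p := by
    by_contra hcon
    push_neg at hcon
    obtain ⟨k, hk⟩ := hcon
    have hki : k ≠ i₁ := by
      intro h
      rw [h, hβp] at hk
      exact lt_irrefl 0 hk
    -- the centroid of the facet
    set q : EuclideanSpace ℝ (Fin m) := Finset.centroid ℝ ({i₁}ᶜ : Finset (Fin (m + 1))) v
      with hqdef
    have hcardc : ({i₁}ᶜ : Finset (Fin (m + 1))).card = m := by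
      rw [Finset.card_compl]
      simp
    have hcne : ({i₁}ᶜ : Finset (Fin (m + 1))).Nonempty := ⟨j₀, by simp [hj₀]⟩
    have hwsum : ∑ j ∈ ({i₁}ᶜ : Finset (Fin (m + 1))),
        Finset.centroidWeights ℝ ({i₁}ᶜ : Finset (Fin (m + 1))) j = 1 :=
      Finset.sum_centroidWeights_eq_one_of_nonempty ℝ _ hcne
    have hqc : ∀ j, j ≠ i₁ → b.coord j q = (m : ℝ)⁻¹ := by
      intro j hj
      rw [hqdef]
      have he : Finset.centroid ℝ ({i₁}ᶜ : Finset (Fin (m + 1))) v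
          = Finset.centroid ℝ ({i₁}ᶜ : Finset (Fin (m + 1))) b := rfl
      rw [he, b.coord_apply_centroid (by simp [hj]), hcardc]
    have hqi : b.coord i₁ q = 0 := by
      rw [hqdef]
      have he : Finset.centroid ℝ ({i₁}ᶜ : Finset (Fin (m + 1))) v
          = ({i₁}ᶜ : Finset (Fin (m + 1))).affineCombination ℝ b
              (Finset.centroidWeights ℝ ({i₁}ᶜ : Finset (Fin (m + 1)))) := rfl
      rw [he, b.coord_apply_combination_of_notMem (by simp) hwsum]
    have hminv : (0 : ℝ) < (m : ℝ)⁻¹ := by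
      have h0 : (0 : ℝ) < (m : ℝ) := by exact_mod_cast hm
      positivity
    -- direction of the section line
    set d : EuclideanSpace ℝ (Fin m) := q - p with hd
    have hφd : φ d = 0 := by
      rw [hφ, hd, hsub' i₁ q p, hqi, hβp, sub_zero]
    have hdne : d ≠ 0 := by
      intro h0
      rw [hd, sub_eq_zero] at h0
      rw [← h0, hqc k hki] at hk
      linarith
    have hund : (inner ℝ u d : ℝ) = 0 := by rw [hu]; exact hφd
    have hdn : (0 : ℝ) < ‖d‖ := norm_pos_iff.mpr hdne
    have hdsq : (0 : ℝ) < ‖d‖ ^ 2 := by positivity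
    -- coordinates along the line
    have hline : ∀ (j : Fin (m + 1)) (r : ℝ),
        b.coord j (p + r • d) = b.coord j p + r * (b.coord j).linear d := by
      intro j r
      rw [hadd, map_smul, smul_eq_mul]
    have hlinei : ∀ r : ℝ, b.coord i₁ (p + r • d) = 0 := by
      intro r
      rw [hline, hβp, ← hφ, hφd]
      ring
    have hq1 : q = p + (1 : ℝ) • d := by rw [hd]; module
    have hlineq : ∀ (j : Fin (m + 1)) (r : ℝ),
        b.coord j (p + r • d) = b.coord j q + (r - 1) * (b.coord j).linear d := by
      intro j r
      rw [hline j r, hq1, hline j 1]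
      ring
    -- the simplex is compact
    have hσcpt : IsCompact (convexHull ℝ (Set.range v)) := (Set.finite_range v).isCompact_convexHull ℝ
    have hσcl : IsClosed (convexHull ℝ (Set.range v)) := hσcpt.isClosed
    obtain ⟨C, hC⟩ := hσcpt.isBounded.exists_norm_le
    -- the parameter set of the line section
    set S : Set ℝ := {r : ℝ | p + r • d ∈ convexHull ℝ (Set.range v)} with hSdef
    have hlmap : ∀ r : ℝ, AffineMap.lineMap p q r = p + r • d := by
      intro r
      rw [AffineMap.lineMap_apply, vsub_eq_sub, ← hd, vadd_eq_add]
      abel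
    have hSpre : S = (AffineMap.lineMap p q) ⁻¹' (convexHull ℝ (Set.range v)) := by
      ext r
      simp [hSdef, hlmap r]
    have hSconv : Convex ℝ S := by
      rw [hSpre]
      exact (convex_convexHull ℝ _).affine_preimage _
    have hSclosed : IsClosed S := by
      rw [hSpre]
      have hcont : Continuous (AffineMap.lineMap p q : ℝ → EuclideanSpace ℝ (Fin m)) :=
        AffineMap.lineMap_continuous
      exact IsClosed.preimage hcont hσcl
    have hbnd : ∀ r ∈ S, |r| ≤ (C + ‖p‖) / ‖d‖ := by
      intro r hr
      have h1' : ‖p + r • d‖ ≤ C := hC _ hr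
      have h3 : ‖(p + r • d) - p‖ ≤ ‖p + r • d‖ + ‖p‖ := norm_sub_le _ _
      have h4 : (p + r • d) - p = r • d := by abel
      rw [h4, norm_smul, Real.norm_eq_abs] at h3
      rw [le_div_iff₀ hdn]
      linarith
    have hbddA : BddAbove S := ⟨(C + ‖p‖) / ‖d‖, fun r hr => (le_abs_self r).trans (hbnd r hr)⟩
    have hbddB : BddBelow S := ⟨-((C + ‖p‖) / ‖d‖), fun r hr => by
      have h1' := hbnd r hr
      have h2' := neg_abs_le r
      linarith⟩
    -- an interval around the parameter 1 lies in `S`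
    set A : ℝ := ∑ j, |(b.coord j).linear d| with hA
    have hAnn : (0 : ℝ) ≤ A := by
      rw [hA]
      exact Finset.sum_nonneg fun j _ => abs_nonneg _
    have hcj : ∀ j, |(b.coord j).linear d| ≤ A := by
      intro j
      rw [hA]
      exact Finset.single_le_sum (f := fun i => |(b.coord i).linear d|) (fun i _ => abs_nonneg _) (Finset.mem_univ j)
    set ε : ℝ := (m : ℝ)⁻¹ / (A + 1) with hε
    have hεpos : 0 < ε := by
      rw [hε]
      have hA1 : (0 : ℝ) < A + 1 := by linarith
      exact div_pos hminv hA1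
    have hball : ∀ r : ℝ, |r - 1| ≤ ε → (p + r • d) ∈ convexHull ℝ (Set.range v) := by
      intro r hr
      rw [hσ]
      intro j
      by_cases hj : j = i₁
      · subst hj
        exact le_of_eq (hlinei r).symm
      · rw [hlineq j r, hqc j hj]
        have h1' : |(r - 1) * (b.coord j).linear d| ≤ ε * A := by
          rw [abs_mul]
          exact mul_le_mul hr (hcj j) (abs_nonneg _) hεpos.le
        have h2' : ε * A < (m : ℝ)⁻¹ := by
          rw [hε, div_mul_eq_mul_div, div_lt_iff₀ (by linarith)]
          nlinarith
        have h3' := neg_abs_le ((r - 1) * (b.coord j).linear d)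
        linarith
    have h1S : (1 : ℝ) ∈ S := hball 1 (by simp [hεpos.le])
    set r₁ : ℝ := sInf S with hr₁
    set r₂ : ℝ := sSup S with hr₂
    have hSne : S.Nonempty := ⟨1, h1S⟩
    have hr₁S : r₁ ∈ S := hSclosed.csInf_mem hSne hbddB
    have hr₂S : r₂ ∈ S := hSclosed.csSup_mem hSne hbddA
    have hmem₁ : (1 - ε) ∈ S :=
      hball (1 - ε) (by rw [show (1 - ε) - 1 = -ε by ring, abs_neg, abs_of_pos hεpos])
    have hmem₂ : (1 + ε) ∈ S :=
      hball (1 + ε) (by rw [show (1 + ε) - 1 = ε by ring, abs_of_pos hεpos])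
    have hr₁le : r₁ ≤ 1 - ε := csInf_le hbddB hmem₁
    have hr₂ge : 1 + ε ≤ r₂ := le_csSup hbddA hmem₂
    have hrlt : r₁ < r₂ := by linarith
    set P₁ : EuclideanSpace ℝ (Fin m) := p + r₁ • d with hP₁
    set P₂ : EuclideanSpace ℝ (Fin m) := p + r₂ • d with hP₂
    have hP₁σ : P₁ ∈ convexHull ℝ (Set.range v) := hr₁S
    have hP₂σ : P₂ ∈ convexHull ℝ (Set.range v) := hr₂S
    have hcP₁ : b.coord i₁ P₁ = 0 := by rw [hP₁]; exact hlinei r₁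
    have hcP₂ : b.coord i₁ P₂ = 0 := by rw [hP₂]; exact hlinei r₂
    -- nondegeneracy
    have hvP₁ : v i₁ ≠ P₁ := by
      intro h
      have h' := hcP₁
      rw [← h, hco] at h'
      simp at h'
    have hvP₂ : v i₁ ≠ P₂ := by
      intro h
      have h' := hcP₂
      rw [← h, hco] at h'
      simp at h'
    have hP₁₂ : P₁ ≠ P₂ := by
      intro h
      rw [hP₁, hP₂, add_right_inj] at h
      have h'' : (r₁ - r₂) • d = 0 := by rw [sub_smul, h, sub_self]
      rcases smul_eq_zero.mp h'' with h' | h'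
      · have : r₁ = r₂ := by linarith [sub_eq_zero.mp h']
        linarith
      · exact hdne h'
    -- affine independence of the triangle
    have hcol : ¬ Collinear ℝ ({v i₁, P₁, P₂} : Set (EuclideanSpace ℝ (Fin m))) := by
      intro hc
      have hmemline := hc.mem_affineSpan_of_mem_of_ne
        (Set.mem_insert_of_mem _ (Set.mem_insert _ _))
        (Set.mem_insert_of_mem _ (Set.mem_insert_of_mem _ rfl))
        (Set.mem_insert _ _) hP₁₂
      have hre : ({P₁, P₂} : Set (EuclideanSpace ℝ (Fin m))) = Set.range ![P₁, P₂] := by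
        simp_rw [Matrix.range_cons, Matrix.range_empty, Set.singleton_union,
          insert_empty_eq]
      rw [hre] at hmemline
      obtain ⟨wt, hwt, hrep⟩ := eq_affineCombination_of_mem_affineSpan_of_fintype hmemline
      rw [Finset.univ.affineCombination_eq_linear_combination _ _ hwt, Fin.sum_univ_two] at hrep
      rw [Fin.sum_univ_two] at hwt
      simp only [Matrix.cons_val_zero, Matrix.cons_val_one, Matrix.head_cons] at hrep
      have hc0 : b.coord i₁ (v i₁) = 0 := by
        rw [hrep, hP₁, hP₂]
        have he : wt 0 • (p + r₁ • d) + wt 1 • (p + r₂ • d)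
            = p + (wt 0 * r₁ + wt 1 * r₂) • d := by
          have hw1 : wt 1 = 1 - wt 0 := by linarith
          rw [hw1]
          module
        rw [he, hlinei]
      rw [hco] at hc0
      simp at hc0
    have hindep : AffineIndependent ℝ ![v i₁, P₁, P₂] :=
      affineIndependent_iff_not_collinear_set.mpr hcol
    -- the 2-plane
    have hfr : Module.finrank ℝ
        (affineSpan ℝ ({v i₁, P₁, P₂} : Set (EuclideanSpace ℝ (Fin m)))).direction = 2 := by
      rw [direction_affineSpan]
      have hre : ({v i₁, P₁, P₂} : Set (EuclideanSpace ℝ (Fin m)))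
          = Set.range ![v i₁, P₁, P₂] := by
        simp_rw [Matrix.range_cons, Matrix.range_empty, Set.singleton_union,
          insert_empty_eq]
      rw [hre]
      exact hindep.finrank_vectorSpan (by simp)
    -- the section of the simplex by the plane is the triangle
    have hLσ : (affineSpan ℝ ({v i₁, P₁, P₂} : Set (EuclideanSpace ℝ (Fin m)))
          : Set (EuclideanSpace ℝ (Fin m))) ∩ convexHull ℝ (Set.range v)
        = convexHull ℝ {v i₁, P₁, P₂} := by
      apply Set.Subset.antisymm
      · rintro z ⟨hzL, hzσ⟩
        have hre : ({v i₁, P₁, P₂} : Set (EuclideanSpace ℝ (Fin m)))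
            = Set.range ![v i₁, P₁, P₂] := by
          simp_rw [Matrix.range_cons, Matrix.range_empty, Set.singleton_union,
            insert_empty_eq]
        rw [hre] at hzL
        obtain ⟨wt, hwt0, hrepA⟩ := eq_affineCombination_of_mem_affineSpan_of_fintype hzL
        have hrepS : z = ∑ i, wt i • ![v i₁, P₁, P₂] i := by
          rw [hrepA, Finset.univ.affineCombination_eq_linear_combination _ _ hwt0]
        have hrep : z = wt 0 • v i₁ + wt 1 • P₁ + wt 2 • P₂ := by
          rw [hrepS, Fin.sum_univ_three]
          simp only [Matrix.cons_val_zero, Matrix.cons_val_one, Matrix.head_cons,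
            Matrix.cons_val_two, Matrix.tail_cons]
        have hwt3 : wt 0 + wt 1 + wt 2 = 1 := by rw [← Fin.sum_univ_three wt]; exact hwt0
        have hzcoord : ∀ j, 0 ≤ b.coord j z := by
          rw [hσ] at hzσ
          exact hzσ
        have hαz : b.coord i₁ z = wt 0 := by
          rw [hrepA, Finset.map_affineCombination _ _ _ hwt0 (b.coord i₁),
            Finset.univ.affineCombination_eq_linear_combination _ _ hwt0, Fin.sum_univ_three]
          simp only [Function.comp_apply, Matrix.cons_val_zero, Matrix.cons_val_one,
            Matrix.head_cons, Matrix.cons_val_two, Matrix.tail_cons, smul_eq_mul]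
          rw [hco, hcP₁, hcP₂]
          simp
        have hα0 : 0 ≤ wt 0 := hαz ▸ hzcoord i₁
        have hsz : ∑ j, b.coord j z = 1 := b.sum_coord_apply_eq_one z
        have hα1 : wt 0 ≤ 1 := by
          rw [← hαz, ← hsz]
          exact Finset.single_le_sum (f := fun j => b.coord j z)
            (fun i _ => hzcoord i) (Finset.mem_univ i₁)
        rcases eq_or_lt_of_le hα1 with hα1' | hα1'
        · -- `wt 0 = 1`: `z` is the apex vertex
          have hrest : ∀ j, j ≠ i₁ → b.coord j z = 0 := by
            intro j hj
            have hsplit : b.coord i₁ z + ∑ j' ∈ Finset.univ.erase i₁, b.coord j' z = 1 := by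
              rw [← hsz]
              exact Finset.add_sum_erase _ (fun j => b.coord j z) (Finset.mem_univ i₁)
            rw [hαz, hα1'] at hsplit
            have hz0 : ∑ j' ∈ Finset.univ.erase i₁, b.coord j' z = 0 := by linarith
            exact (Finset.sum_eq_zero_iff_of_nonneg (fun i _ => hzcoord i)).mp hz0 j
              (Finset.mem_erase.mpr ⟨hj, Finset.mem_univ j⟩)
          have hzv : z = v i₁ := by
            apply b.ext_elem
            intro j
            by_cases hj : j = i₁
            · subst hj
              rw [hαz, hα1', hco]
              simp
            · rw [hrest j hj, hco]
              simp [hj]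
          rw [hzv]
          exact subset_convexHull ℝ _ (Set.mem_insert _ _)
        · -- `wt 0 < 1`
          have h1α : 0 < 1 - wt 0 := by linarith
          set z' : EuclideanSpace ℝ (Fin m) := (1 - wt 0)⁻¹ • (z - wt 0 • v i₁) with hz'def
          have hzz' : z = wt 0 • v i₁ + (1 - wt 0) • z' := by
            rw [hz'def, smul_smul, mul_inv_cancel₀ h1α.ne', one_smul]
            abel
          have hzlm : z = AffineMap.lineMap (v i₁) z' (1 - wt 0) := by
            rw [AffineMap.lineMap_apply, vsub_eq_sub, vadd_eq_add, hzz']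
            module
          have hcz' : ∀ j, b.coord j z
              = (1 - wt 0) * (b.coord j z' - b.coord j (v i₁)) + b.coord j (v i₁) := by
            intro j
            have h := congrArg (b.coord j) hzlm
            rwa [AffineMap.apply_lineMap, AffineMap.lineMap_apply, vsub_eq_sub,
              vadd_eq_add, smul_eq_mul] at h
          have hco1 : b.coord i₁ (v i₁) = 1 := by rw [hco]; simp
          have hz'i : b.coord i₁ z' = 0 := by
            have h := hcz' i₁
            rw [hαz, hco1] at h
            have h2 : (1 - wt 0) * b.coord i₁ z' = 0 := by linear_combination -h
            rcases mul_eq_zero.mp h2 with h' | h'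
            · exact absurd h' h1α.ne'
            · exact h'
          have hz'c : ∀ j, 0 ≤ b.coord j z' := by
            intro j
            by_cases hj : j = i₁
            · subst hj
              rw [hz'i]
            · have h := hcz' j
              rw [hco, if_neg hj] at h
              have h0 := hzcoord j
              by_contra hcon'
              push_neg at hcon'
              have hlt : (1 - wt 0) * (b.coord j z' - 0) < 0 :=
                mul_neg_of_pos_of_neg h1α (by linarith)
              linarith
          have hz'σ : z' ∈ convexHull ℝ (Set.range v) := by
            rw [hσ]
            exact hz'c
          -- `z'` lies on the parameter line
          have hlammu : wt 1 + wt 2 = 1 - wt 0 := by linarith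
          have hsplit : (1 - wt 0) • z' = wt 1 • P₁ + wt 2 • P₂ := by
            rw [hz'def, smul_smul, mul_inv_cancel₀ h1α.ne', one_smul, hrep]
            abel
          set ρ : ℝ := (1 - wt 0)⁻¹ * (wt 1 * r₁ + wt 2 * r₂) with hρdef
          have hc : (1 - wt 0) * ρ = wt 1 * r₁ + wt 2 * r₂ := by
            rw [hρdef, ← mul_assoc, mul_inv_cancel₀ h1α.ne', one_mul]
          have hz'line : z' = p + ρ • d := by
            have htarget : (1 - wt 0) • (p + ρ • d) = wt 1 • P₁ + wt 2 • P₂ := by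
              rw [smul_add, smul_smul, hc, hP₁, hP₂, ← hlammu]
              module
            have h := hsplit.trans htarget.symm
            exact smul_right_injective (EuclideanSpace ℝ (Fin m)) h1α.ne' h
          have hρS : ρ ∈ S := by
            rw [hSdef, Set.mem_setOf_eq, ← hz'line]
            exact hz'σ
          have hρ1 : r₁ ≤ ρ := csInf_le hbddB hρS
          have hρ2 : ρ ≤ r₂ := le_csSup hbddA hρS
          have hmu : 0 ≤ wt 2 := by
            have e : wt 2 * (r₂ - r₁) = (1 - wt 0) * (ρ - r₁) := by
              linear_combination -hc - r₁ * hlammu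
            by_contra hcon'
            push_neg at hcon'
            have hlt : wt 2 * (r₂ - r₁) < 0 := mul_neg_of_neg_of_pos hcon' (by linarith)
            have hge : 0 ≤ (1 - wt 0) * (ρ - r₁) := mul_nonneg h1α.le (by linarith)
            linarith
          have hlam : 0 ≤ wt 1 := by
            have e : wt 1 * (r₂ - r₁) = (1 - wt 0) * (r₂ - ρ) := by
              linear_combination hc + r₂ * hlammu
            by_contra hcon'
            push_neg at hcon'
            have hlt : wt 1 * (r₂ - r₁) < 0 := mul_neg_of_neg_of_pos hcon' (by linarith)
            have hge : 0 ≤ (1 - wt 0) * (r₂ - ρ) := mul_nonneg h1α.le (by linarith)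
            linarith
          have hwpos : (0 : ℝ) < ∑ i, wt i := by
            rw [hwt0]
            norm_num
          have hnn : ∀ i ∈ (Finset.univ : Finset (Fin 3)), 0 ≤ wt i := by
            intro i _
            fin_cases i
            · exact hα0
            · exact hlam
            · exact hmu
          have hpts : ∀ i ∈ (Finset.univ : Finset (Fin 3)),
              ![v i₁, P₁, P₂] i ∈ ({v i₁, P₁, P₂} : Set (EuclideanSpace ℝ (Fin m))) := by
            intro i _
            fin_cases i
            · exact Set.mem_insert _ _
            · exact Set.mem_insert_of_mem _ (Set.mem_insert _ _)
            · exact Set.mem_insert_of_mem _ (Set.mem_insert_of_mem _ rfl)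
          have hmemz := Finset.centerMass_mem_convexHull Finset.univ hnn hwpos hpts
          rwa [Finset.centerMass_eq_of_sum_1 _ _ hwt0, ← hrepS] at hmemz
      · apply convexHull_min
        · intro z hz
          rcases hz with rfl | rfl | rfl
          · exact ⟨subset_affineSpan ℝ _ (Set.mem_insert _ _),
              subset_convexHull ℝ _ ⟨i₁, rfl⟩⟩
          · exact ⟨subset_affineSpan ℝ _ (Set.mem_insert_of_mem _ (Set.mem_insert _ _)), hP₁σ⟩
          · exact ⟨subset_affineSpan ℝ _
              (Set.mem_insert_of_mem _ (Set.mem_insert_of_mem _ rfl)), hP₂σ⟩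
        · exact (AffineSubspace.convex _).inter (convex_convexHull ℝ _)
    -- apply sharpness
    obtain ⟨-, hang1, hang2⟩ := hsharp (v i₁) ⟨i₁, rfl⟩ P₁ P₂ hindep
      ⟨affineSpan ℝ ({v i₁, P₁, P₂} : Set (EuclideanSpace ℝ (Fin m))),
        subset_affineSpan ℝ _ (Set.mem_insert _ _), hfr, hLσ⟩
    have hv_p : v i₁ - p = (‖u‖ ^ 2)⁻¹ • u := by rw [hp]; abel
    -- the angle at `P₁` gives `r₁ < 0`
    have hip1 : 0 < (inner ℝ (v i₁ - P₁) (P₂ - P₁) : ℝ) := by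
      apply aux_inner_pos_of_angle_lt (sub_ne_zero.mpr hvP₁) (sub_ne_zero.mpr (Ne.symm hP₁₂))
      rw [EuclideanGeometry.angle] at hang1
      simpa [vsub_eq_sub] using hang1
    have hcomp1 : (inner ℝ (v i₁ - P₁) (P₂ - P₁) : ℝ) = (r₂ - r₁) * (-r₁ * ‖d‖ ^ 2) := by
      have e1 : v i₁ - P₁ = (‖u‖ ^ 2)⁻¹ • u - r₁ • d := by
        rw [hP₁, ← hv_p]
        abel
      have e2 : P₂ - P₁ = (r₂ - r₁) • d := by
        rw [hP₁, hP₂, sub_smul]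
        abel
      rw [e1, e2, real_inner_smul_right, inner_sub_left, real_inner_smul_left,
        real_inner_smul_left, hund, real_inner_self_eq_norm_sq]
      ring
    have hr₁neg : r₁ < 0 := by
      rw [hcomp1] at hip1
      rcases mul_pos_iff.mp hip1 with ⟨h1', h2'⟩ | ⟨h1', h2'⟩
      · by_contra hcon'
        push_neg at hcon'
        have hmm : 0 ≤ r₁ * ‖d‖ ^ 2 := mul_nonneg hcon' hdsq.le
        linarith
      · linarith
    -- the angle at `P₂` gives `r₂ > 0`
    have hip2 : 0 < (inner ℝ (v i₁ - P₂) (P₁ - P₂) : ℝ) := by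
      apply aux_inner_pos_of_angle_lt (sub_ne_zero.mpr hvP₂) (sub_ne_zero.mpr hP₁₂)
      rw [EuclideanGeometry.angle] at hang2
      simpa [vsub_eq_sub] using hang2
    have hcomp2 : (inner ℝ (v i₁ - P₂) (P₁ - P₂) : ℝ) = (r₁ - r₂) * (-r₂ * ‖d‖ ^ 2) := by
      have e1 : v i₁ - P₂ = (‖u‖ ^ 2)⁻¹ • u - r₂ • d := by
        rw [hP₂, ← hv_p]
        abel
      have e2 : P₁ - P₂ = (r₁ - r₂) • d := by
        rw [hP₁, hP₂, sub_smul]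
        abel
      rw [e1, e2, real_inner_smul_right, inner_sub_left, real_inner_smul_left,
        real_inner_smul_left, hund, real_inner_self_eq_norm_sq]
      ring
    have hr₂pos : 0 < r₂ := by
      rw [hcomp2] at hip2
      rcases mul_pos_iff.mp hip2 with ⟨h1', h2'⟩ | ⟨h1', h2'⟩
      · linarith
      · by_contra hcon'
        push_neg at hcon'
        have hmm : 0 ≤ -r₂ * ‖d‖ ^ 2 := mul_nonneg (by linarith) hdsq.le
        linarith
    -- the foot `p` lies in the simplex, contradiction
    have h0S : (0 : ℝ) ∈ S := hSconv.ordConnected.out hr₁S hr₂S ⟨hr₁neg.le, hr₂pos.le⟩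
    have hpσ : p ∈ convexHull ℝ (Set.range v) := by
      rw [hSdef, Set.mem_setOf_eq, zero_smul, add_zero] at h0S
      exact h0S
    rw [hσ] at hpσ
    linarith [hpσ k]
  -- final contradiction
  have hsum1 : ∑ j, b.coord j p = 1 := b.sum_coord_apply_eq_one p
  have hcomb : ∑ j, b.coord j p • v j = p := b.linear_combination_coord_eq_self p
  have hzero : ∑ j, b.coord j p • (p - v j) = 0 := by
    have h := Finset.sum_sub_distrib (s := Finset.univ)
      (f := fun j => b.coord j p • p) (g := fun j => b.coord j p • v j)
    simp only [← smul_sub] at h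
    rw [h, hcomb, ← Finset.sum_smul, hsum1, one_smul, sub_self]
  have hzero' : (0 : ℝ) = ∑ j, b.coord j p * (inner ℝ w (p - v j) : ℝ) := by
    have h := inner_sum (𝕜 := ℝ) Finset.univ (fun j => b.coord j p • (p - v j)) w
    rw [hzero, inner_zero_right] at h
    rw [h]
    congr 1
    ext j
    rw [real_inner_smul_right]
  have hge : ∑ j, b.coord j p * (inner ℝ w (p - v j) : ℝ) ≥ ∑ j, b.coord j p * (-s₀) := by
    apply Finset.sum_le_sum
    intro j _
    by_cases hj : j = i₁
    · subst hj; rw [hβp]; simp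
    · exact mul_le_mul_of_nonneg_left (hkey j hj) (hcoords j)
  have hfin : ∑ j, b.coord j p * (-s₀) = -s₀ := by
    rw [← Finset.sum_mul, hsum1, one_mul]
  rw [hfin] at hge
  rw [← hzero'] at hge
  linarith
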